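/- Let f : ℝ^n → ℝ be twice continuously differentiable, attain its minimum at some point, and suppose the Hessian ∇²f(z) (the derivative of the gradient map z ↦ ∇f(z)) is positive definite for every z ∈ ℝ^n, so that f has a unique minimizer x*. Let σ, ρ > 0, p ∈ [0,1), q > 1, and let g : ℝ^n → ℝ^n satisfy ⟨g(y), y⟩ ≥ σ‖y‖₂^{1+p} + ρ‖y‖₂^{1+q} for all y ∈ ℝ^n. If x : [0,∞) → ℝ^n is differentiable and satisfies the Newton-based flow ∇²f(x(t))·x′(t) = −g(∇f(x(t))) for all t ≥ 0 (equivalently x′(t) = −(∇²f(x(t)))^{−1} g(∇f(x(t)))), then ∇f(x(t)) = 0, i.e. x(t) = x*, for all t ≥ T, where T = 1/(σ(1−p)) + 1/(ρ(q−1)); this bound is independent of both x(0) and the PL constant of f. (Theorem 3.) -/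

import Mathlib

open scoped RealInnerProductSpace

/-- Mean value bound: if `h` has derivative `h'` at every point of `[a,b]` and `h' ≤ c` there,
then `h b - h a ≤ c * (b - a)`. -/
lemma aux_deriv_le {h h' : ℝ → ℝ} {a b c : ℝ} (hab : a ≤ b)
    (hd : ∀ s ∈ Set.Icc a b, HasDerivAt h (h' s) s)
    (hc : ∀ s ∈ Set.Icc a b, h' s ≤ c) :
    h b - h a ≤ c * (b - a) := by
  have hmono : MonotoneOn (fun s => c * s - h s) (Set.Icc a b) := by
    apply monotoneOn_of_deriv_nonneg (convex_Icc a b)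
    · intro s hs
      exact (((hasDerivAt_id s).const_mul c).sub (hd s hs)).continuousAt.continuousWithinAt
    · intro s hs
      rw [interior_Icc] at hs
      exact (((hasDerivAt_id s).const_mul c).sub
        (hd s (Set.Ioo_subset_Icc_self hs))).differentiableAt.differentiableWithinAt
    · intro s hs
      rw [interior_Icc] at hs
      have hds : HasDerivAt (fun t => c * t - h t) (c - h' s) s := by
        have h2 := ((hasDerivAt_id s).const_mul c).sub (hd s (Set.Ioo_subset_Icc_self hs))
        rw [mul_one] at h2
        exact h2
      rw [hds.deriv]
      have := hc s (Set.Ioo_subset_Icc_self hs)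
      linarith
  have := hmono (Set.left_mem_Icc.2 hab) (Set.right_mem_Icc.2 hab) hab
  simp only at this
  linarith

lemma aux_deriv_ge {h h' : ℝ → ℝ} {a b c : ℝ} (hab : a ≤ b)
    (hd : ∀ s ∈ Set.Icc a b, HasDerivAt h (h' s) s)
    (hc : ∀ s ∈ Set.Icc a b, c ≤ h' s) :
    c * (b - a) ≤ h b - h a := by
  have := aux_deriv_le (h := fun s => -h s) (h' := fun s => -(h' s)) (c := -c) hab
    (fun s hs => (hd s hs).neg) (fun s hs => neg_le_neg (hc s hs))
  linarith

/-- `(u^2)^(e-1) * u^c = 1` when `u > 0` and `2*(e-1)+c = 0`. -/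
lemma aux_rpow {u : ℝ} (hu : 0 < u) {e c : ℝ} (h : 2 * (e - 1) + c = 0) :
    ((u ^ 2 : ℝ)) ^ (e - 1) * u ^ c = 1 := by
  have h2 : ((u ^ 2 : ℝ)) ^ (e - 1) = u ^ (2 * (e - 1)) := by
    rw [← Real.rpow_natCast u 2, ← Real.rpow_mul hu.le]
    norm_num
  rw [h2, ← Real.rpow_add hu, h, Real.rpow_zero]

/-- With an everywhere positive-definite Hessian, critical points are unique. -/
lemma aux_crit_unique {n : ℕ} (f : EuclideanSpace ℝ (Fin n) → ℝ)
    (hgd : Differentiable ℝ (gradient f))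
    (hpd : ∀ z h, h ≠ 0 → 0 < ⟪fderiv ℝ (gradient f) z h, h⟫)
    {a b : EuclideanSpace ℝ (Fin n)} (ha : gradient f a = 0) (hb : gradient f b = 0) :
    a = b := by
  by_contra hne
  set d := b - a with hd
  have hdne : d ≠ 0 := sub_ne_zero.2 (Ne.symm hne)
  have hψ : ∀ s : ℝ, HasDerivAt (fun s : ℝ => ⟪gradient f (a + s • d), d⟫)
      (⟪fderiv ℝ (gradient f) (a + s • d) d, d⟫) s := by
    intro s
    have hc : HasDerivAt (fun s : ℝ => a + s • d) d s := by
      simpa using ((hasDerivAt_id s).smul_const d).const_add a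
    have hG := (hgd (a + s • d)).hasFDerivAt.comp_hasDerivAt s hc
    have := HasDerivAt.inner ℝ hG (hasDerivAt_const s d)
    simpa using this
  have hmono : StrictMono (fun s : ℝ => ⟪gradient f (a + s • d), d⟫) :=
    strictMono_of_hasDerivAt_pos hψ (fun s => hpd _ d hdne)
  have h01 := hmono (show (0:ℝ) < 1 by norm_num)
  simp only [zero_smul, add_zero, one_smul] at h01
  rw [ha] at h01
  have hab' : a + d = b := by rw [hd]; abel
  rw [hab', hb] at h01
  simp at h01

set_option maxHeartbeats 1000000 in
/-- Theorem 3: fixed-time convergence of the Newton-based FxT gradient flow. -/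
theorem newton_fxtgf_fixed_time_convergence
    {n : ℕ} (f : EuclideanSpace ℝ (Fin n) → ℝ)
    (hf : ContDiff ℝ 2 f)
    (xstar : EuclideanSpace ℝ (Fin n)) (hmin : ∀ z, f xstar ≤ f z)
    (hpd : ∀ z h, h ≠ 0 → 0 < ⟪fderiv ℝ (gradient f) z h, h⟫)
    (σ ρ p q : ℝ) (hσ : 0 < σ) (hρ : 0 < ρ) (hp : p ∈ Set.Ico (0:ℝ) 1) (hq : 1 < q)
    (g : EuclideanSpace ℝ (Fin n) → EuclideanSpace ℝ (Fin n))
    (hg : ∀ y, σ * ‖y‖ ^ (1 + p) + ρ * ‖y‖ ^ (1 + q) ≤ ⟪g y, y⟫)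
    (x x' : ℝ → EuclideanSpace ℝ (Fin n))
    (hx : ∀ t ≥ (0:ℝ), HasDerivAt x (x' t) t)
    (hflow : ∀ t ≥ (0:ℝ), fderiv ℝ (gradient f) (x t) (x' t) = -(g (gradient f (x t)))) :
    ∀ t : ℝ, 1 / (σ * (1 - p)) + 1 / (ρ * (q - 1)) ≤ t →
      gradient f (x t) = 0 ∧ x t = xstar := by
  obtain ⟨hp0, hp1⟩ := hp
  have hσ1p : 0 < σ * (1 - p) := mul_pos hσ (by linarith)
  have hρq1 : 0 < ρ * (q - 1) := mul_pos hρ (by linarith)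
  set A : ℝ := 1 / (σ * (1 - p)) with hA
  set B : ℝ := 1 / (ρ * (q - 1)) with hB
  have hApos : 0 < A := by rw [hA]; positivity
  have hBpos : 0 < B := by rw [hB]; positivity
  -- the gradient map is C¹
  have hgradC : ContDiff ℝ 1 (gradient f) := by
    have h1 : ContDiff ℝ 1 (fderiv ℝ f) := hf.fderiv_right (by norm_num)
    exact ((InnerProductSpace.toDual ℝ
      (EuclideanSpace ℝ (Fin n))).symm.contDiff).comp h1
  have hgd : Differentiable ℝ (gradient f) := hgradC.differentiable (by norm_num)
  set y : ℝ → EuclideanSpace ℝ (Fin n) := fun t => gradient f (x t) with hy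
  have hy' : ∀ t ≥ (0:ℝ), HasDerivAt y (-(g (y t))) t := by
    intro t ht
    have h1 := (hgd (x t)).hasFDerivAt.comp_hasDerivAt t (hx t ht)
    rw [hflow t ht] at h1
    exact h1
  set W : ℝ → ℝ := fun t => ⟪y t, y t⟫ with hW
  have hWnorm : ∀ t, W t = ‖y t‖ ^ 2 := fun t => real_inner_self_eq_norm_sq _
  have hW' : ∀ t ≥ (0:ℝ), HasDerivAt W (-(2 * ⟪g (y t), y t⟫)) t := by
    intro t ht
    have h1 := HasDerivAt.inner ℝ (hy' t ht) (hy' t ht)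
    refine h1.congr_deriv ?_
    rw [inner_neg_right, inner_neg_left, real_inner_comm]
    ring
  have hWcont : ContinuousOn W (Set.Ici 0) := fun t ht =>
    ((hW' t ht).continuousAt).continuousWithinAt
  have hgy0 : ∀ v : EuclideanSpace ℝ (Fin n), 0 ≤ ⟪g v, v⟫ := fun v =>
    le_trans (by positivity) (hg v)
  have hWanti : AntitoneOn W (Set.Ici 0) := by
    apply antitoneOn_of_deriv_nonpos (convex_Ici 0) hWcont
    · intro s hs
      rw [interior_Ici] at hs
      exact (hW' s (le_of_lt hs)).differentiableAt.differentiableWithinAt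
    · intro s hs
      rw [interior_Ici] at hs
      rw [(hW' s hs.le).deriv]
      have := hgy0 (y s)
      linarith
  -- key claim: the gradient vanishes at some time in [0, A + B]
  have key : ∃ s ∈ Set.Icc (0:ℝ) (A + B), y s = 0 := by
    by_contra hcon
    push_neg at hcon
    have hWpos : ∀ s ∈ Set.Icc (0:ℝ) (A + B), 0 < W s := by
      intro s hs
      rw [hWnorm]
      have h0 : 0 < ‖y s‖ := norm_pos_iff.2 (hcon s hs)
      positivity
    have hBmem : B ∈ Set.Icc (0:ℝ) (A + B) := ⟨hBpos.le, by linarith⟩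
    -- Stage 1 on [0, B] : h₁ = W ^ e1 with e1 = (1-q)/2 increases at rate ≥ ρ(q-1)
    set e1 : ℝ := (1 - q) / 2 with he1
    have h1d : ∀ s ∈ Set.Icc (0:ℝ) B, HasDerivAt (fun s => W s ^ e1)
        (-(2 * ⟪g (y s), y s⟫) * e1 * W s ^ (e1 - 1)) s := by
      intro s hs
      have hsT : s ∈ Set.Icc (0:ℝ) (A + B) := ⟨hs.1, by linarith [hs.2]⟩
      exact (hW' s hs.1).rpow_const (Or.inl (ne_of_gt (hWpos s hsT)))
    have h1b : ∀ s ∈ Set.Icc (0:ℝ) B,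
        ρ * (q - 1) ≤ -(2 * ⟪g (y s), y s⟫) * e1 * W s ^ (e1 - 1) := by
      intro s hs
      have hsT : s ∈ Set.Icc (0:ℝ) (A + B) := ⟨hs.1, by linarith [hs.2]⟩
      have hWp := hWpos s hsT
      have hu : 0 < ‖y s‖ := norm_pos_iff.2 (hcon s hsT)
      have hgb : ρ * ‖y s‖ ^ (1 + q) ≤ ⟪g (y s), y s⟫ := by
        have h0 : 0 ≤ σ * ‖y s‖ ^ (1 + p) := by positivity
        linarith [hg (y s)]
      have hWe : 0 < W s ^ (e1 - 1) := Real.rpow_pos_of_pos hWp _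
      have hkey : W s ^ (e1 - 1) * ‖y s‖ ^ (1 + q) = 1 := by
        rw [hWnorm]
        exact aux_rpow hu (by rw [he1]; ring)
      have hrhs : -(2 * ⟪g (y s), y s⟫) * e1 * W s ^ (e1 - 1)
          = (q - 1) * ⟪g (y s), y s⟫ * W s ^ (e1 - 1) := by
        rw [he1]; ring
      rw [hrhs]
      have hfinal : ρ * (q - 1) = (q - 1) * (ρ * ‖y s‖ ^ (1 + q)) * W s ^ (e1 - 1) := by
        have : (q - 1) * (ρ * ‖y s‖ ^ (1 + q)) * W s ^ (e1 - 1)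
            = (q - 1) * ρ * (W s ^ (e1 - 1) * ‖y s‖ ^ (1 + q)) := by ring
        rw [this, hkey]; ring
      rw [hfinal]
      have hq1 : (0:ℝ) ≤ q - 1 := by linarith
      exact mul_le_mul_of_nonneg_right
        (mul_le_mul_of_nonneg_left hgb hq1) hWe.le
    have hstage1 := aux_deriv_ge hBpos.le h1d h1b
    have hBval : ρ * (q - 1) * (B - 0) = 1 := by
      rw [hB, sub_zero, mul_one_div_cancel hρq1.ne']
    have hW0pos : 0 < W 0 ^ e1 :=
      Real.rpow_pos_of_pos (hWpos 0 ⟨le_rfl, by linarith⟩) _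
    have hWB1 : 1 < W B ^ e1 := by
      rw [hBval] at hstage1
      linarith
    have hWBlt : W B < 1 := by
      by_contra hge
      push_neg at hge
      have he1neg : e1 ≤ 0 := by rw [he1]; linarith
      have := Real.rpow_le_one_of_one_le_of_nonpos hge he1neg
      linarith
    -- Stage 2 on [B, A + B] : h₂ = W ^ e2 with e2 = (1-p)/2 decreases at rate ≥ σ(1-p)
    set e2 : ℝ := (1 - p) / 2 with he2
    have h2d : ∀ s ∈ Set.Icc B (A + B), HasDerivAt (fun s => W s ^ e2)
        (-(2 * ⟪g (y s), y s⟫) * e2 * W s ^ (e2 - 1)) s := by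
      intro s hs
      have hsT : s ∈ Set.Icc (0:ℝ) (A + B) := ⟨le_trans hBpos.le hs.1, hs.2⟩
      exact (hW' s hsT.1).rpow_const (Or.inl (ne_of_gt (hWpos s hsT)))
    have h2b : ∀ s ∈ Set.Icc B (A + B),
        -(2 * ⟪g (y s), y s⟫) * e2 * W s ^ (e2 - 1) ≤ -(σ * (1 - p)) := by
      intro s hs
      have hsT : s ∈ Set.Icc (0:ℝ) (A + B) := ⟨le_trans hBpos.le hs.1, hs.2⟩
      have hWp := hWpos s hsT
      have hu : 0 < ‖y s‖ := norm_pos_iff.2 (hcon s hsT)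
      have hgb : σ * ‖y s‖ ^ (1 + p) ≤ ⟪g (y s), y s⟫ := by
        have h0 : 0 ≤ ρ * ‖y s‖ ^ (1 + q) := by positivity
        linarith [hg (y s)]
      have hWe : 0 < W s ^ (e2 - 1) := Real.rpow_pos_of_pos hWp _
      have hkey : W s ^ (e2 - 1) * ‖y s‖ ^ (1 + p) = 1 := by
        rw [hWnorm]
        exact aux_rpow hu (by rw [he2]; ring)
      have hrhs : -(2 * ⟪g (y s), y s⟫) * e2 * W s ^ (e2 - 1)
          = -((1 - p) * ⟪g (y s), y s⟫ * W s ^ (e2 - 1)) := by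
        rw [he2]; ring
      rw [hrhs]
      have hfinal : σ * (1 - p) = (1 - p) * (σ * ‖y s‖ ^ (1 + p)) * W s ^ (e2 - 1) := by
        have : (1 - p) * (σ * ‖y s‖ ^ (1 + p)) * W s ^ (e2 - 1)
            = (1 - p) * σ * (W s ^ (e2 - 1) * ‖y s‖ ^ (1 + p)) := by ring
        rw [this, hkey]; ring
      have hp1' : (0:ℝ) ≤ 1 - p := by linarith
      apply neg_le_neg
      rw [hfinal]
      exact mul_le_mul_of_nonneg_right
        (mul_le_mul_of_nonneg_left hgb hp1') hWe.le
    have hstage2 := aux_deriv_le (by linarith : B ≤ A + B) h2d h2b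
    have hAval : -(σ * (1 - p)) * (A + B - B) = -1 := by
      rw [hA]; field_simp; ring
    rw [hAval] at hstage2
    have hWBe2 : W B ^ e2 < 1 := by
      apply Real.rpow_lt_one (hWpos B hBmem).le hWBlt
      rw [he2]; linarith
    have hWTpos : 0 < W (A + B) ^ e2 :=
      Real.rpow_pos_of_pos (hWpos (A + B) ⟨by linarith, le_rfl⟩) _
    linarith
  obtain ⟨s0, hs0mem, hys0⟩ := key
  intro t ht
  have hT0 : (0:ℝ) ≤ A + B := by linarith
  have hyt : y t = 0 := by
    have h1 : W t ≤ W s0 :=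
      hWanti (Set.mem_Ici.2 hs0mem.1) (Set.mem_Ici.2 (le_trans hT0 ht))
        (le_trans hs0mem.2 ht)
    have h2 : W s0 = 0 := by simp [hW, hys0]
    have h3 : (0:ℝ) ≤ W t := real_inner_self_nonneg
    have h4 : W t = 0 := le_antisymm (h2 ▸ h1) h3
    rwa [hW, inner_self_eq_zero] at h4
  refine ⟨hyt, ?_⟩
  have hstar : gradient f xstar = 0 := by
    have hloc : IsLocalMin f xstar := Filter.Eventually.of_forall (fun z => hmin z)
    have hfd := hloc.fderiv_eq_zero
    show (InnerProductSpace.toDual ℝ (EuclideanSpace ℝ (Fin n))).symm (fderiv ℝ f xstar) = 0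
    rw [hfd]
    simp
  exact aux_crit_unique f hgd hpd hyt hstar
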